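/- Dependence of the optimal revenue rate on the arrival rate: fix μ > 0 and K ≥ 1, and for each λ > 0 let θ*(λ) be the unique solution of θ = λ·m(g_0^λ(θ)), where g_{K−1}^λ(θ) = θ/(K·μ) and g_{i−1}^λ(θ) = (θ − λ·m(g_i^λ(θ)))/(i·μ) for i = K−1, …, 1. Then (a) λ ↦ θ*(λ) is nondecreasing in λ, and (b) λ ↦ θ*(λ)/λ is nonincreasing in λ. -/

import Mathlib

/-- Dependence of the optimal revenue rate on the arrival rate:
fixing `μ > 0` and `K ≥ 1`, with `g_{K−1}^λ(θ) = θ/(K·μ)` and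
`g_{i−1}^λ(θ) = (θ − λ·m(g_i^λ(θ)))/(i·μ)`, and `θ*(λ)` the (unique) solution
of `θ = λ·m(g_0^λ(θ))`, (a) `λ ↦ θ*(λ)` is nondecreasing and
(b) `λ ↦ θ*(λ)/λ` is nonincreasing on `λ > 0`. -/
theorem stmt_16
    (G : ℝ → ℝ) (hG0 : ∀ u, 0 ≤ G u) (hG1 : ∀ u, G u ≤ 1) (hGanti : Antitone G)
    (m : ℝ → ℝ)
    (hm : ∀ B : ℝ, IsLUB ((fun u => (u - B) * G u) '' Set.Ici (0 : ℝ)) (m B))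
    (μ : ℝ) (hμ : 0 < μ)
    (K : ℕ) (hK : 1 ≤ K)
    (g : ℝ → ℕ → ℝ → ℝ)
    (hgtop : ∀ lam : ℝ, 0 < lam → ∀ θ : ℝ, g lam (K - 1) θ = θ / (K * μ))
    (hgrec : ∀ lam : ℝ, 0 < lam → ∀ i : ℕ, 1 ≤ i → i + 1 ≤ K →
      ∀ θ : ℝ, g lam (i - 1) θ = (θ - lam * m (g lam i θ)) / (i * μ))
    (θstar : ℝ → ℝ)
    (hθ : ∀ lam : ℝ, 0 < lam → θstar lam = lam * m (g lam 0 (θstar lam))) :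
    (∀ lam₁ lam₂ : ℝ, 0 < lam₁ → lam₁ ≤ lam₂ → θstar lam₁ ≤ θstar lam₂) ∧
    (∀ lam₁ lam₂ : ℝ, 0 < lam₁ → lam₁ ≤ lam₂ →
      θstar lam₂ / lam₂ ≤ θstar lam₁ / lam₁) := by
  -- basic facts about m
  have m_nonneg : ∀ B : ℝ, 0 ≤ m B := by
    intro B
    have hmem : (max B 0 - B) * G (max B 0) ∈ (fun u => (u - B) * G u) '' Set.Ici (0:ℝ) :=
      ⟨max B 0, Set.mem_Ici.mpr (le_max_right _ _), rfl⟩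
    have h1 : (max B 0 - B) * G (max B 0) ≤ m B := (hm B).1 hmem
    have h2 : 0 ≤ (max B 0 - B) * G (max B 0) :=
      mul_nonneg (by simp [le_max_left]) (hG0 _)
    linarith
  have m_anti : ∀ B B' : ℝ, B ≤ B' → m B' ≤ m B := by
    intro B B' hBB
    refine (hm B').2 ?_
    rintro x ⟨u, hu, rfl⟩
    show (u - B') * G u ≤ m B
    have h1 : (u - B') * G u ≤ (u - B) * G u :=
      mul_le_mul_of_nonneg_right (by linarith) (hG0 u)
    have h2 : (u - B) * G u ≤ m B := (hm B).1 ⟨u, hu, rfl⟩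
    linarith
  have m_lt : ∀ a b : ℝ, m a < m b → b < a := by
    intro a b h
    by_contra hcon
    push_neg at hcon
    exact absurd (m_anti a b hcon) (by linarith)
  have hKpos : (0:ℝ) < (K:ℝ) := by exact_mod_cast hK
  have hKμ : (0:ℝ) < (K:ℝ) * μ := mul_pos hKpos hμ
  have hden : ∀ i : ℕ, (0:ℝ) < ((i:ℝ)+1) * μ := by
    intro i
    have : (0:ℝ) < (i:ℝ)+1 := by positivity
    exact mul_pos this hμ
  -- Claim A : monotone in θ
  have claimA : ∀ lam : ℝ, 0 < lam → ∀ θ θ' : ℝ, θ ≤ θ' →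
      ∀ d i : ℕ, i + d = K - 1 → g lam i θ ≤ g lam i θ' := by
    intro lam hlam θ θ' hθθ d
    induction d with
    | zero =>
      intro i hi
      have hik : i = K - 1 := by omega
      subst hik
      rw [hgtop lam hlam θ, hgtop lam hlam θ']
      exact div_le_div_of_nonneg_right hθθ hKμ.le
    | succ d ih =>
      intro i hi
      have e : (i+1) - 1 = i := by omega
      have hr := hgrec lam hlam (i+1) (by omega) (by omega)
      rw [e] at hr
      rw [hr θ, hr θ']
      have hmono : m (g lam (i+1) θ') ≤ m (g lam (i+1) θ) :=
        m_anti _ _ (ih (i+1) (by omega))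
      have hd : (0:ℝ) < (↑(i+1):ℝ) * μ := by push_cast; exact hden i
      have hnum : θ - lam * m (g lam (i+1) θ) ≤ θ' - lam * m (g lam (i+1) θ') := by
        nlinarith [mul_le_mul_of_nonneg_left hmono hlam.le]
      exact div_le_div_of_nonneg_right hnum hd.le
  -- Claim B : in λ
  have claimB : ∀ l1 l2 : ℝ, 0 < l1 → l1 ≤ l2 → ∀ θ : ℝ,
      ∀ d i : ℕ, i + d = K - 1 →
      g l2 i θ ≤ g l1 i θ ∧ l1 * m (g l1 i θ) ≤ l2 * m (g l2 i θ) := by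
    intro l1 l2 h1 h12 θ d
    have h2 : 0 < l2 := lt_of_lt_of_le h1 h12
    induction d with
    | zero =>
      intro i hi
      have hik : i = K - 1 := by omega
      subst hik
      rw [hgtop l1 h1 θ, hgtop l2 h2 θ]
      exact ⟨le_refl _, mul_le_mul_of_nonneg_right h12 (m_nonneg _)⟩
    | succ d ih =>
      intro i hi
      obtain ⟨hg, hlm⟩ := ih (i+1) (by omega)
      have e : (i+1) - 1 = i := by omega
      have hr1 := hgrec l1 h1 (i+1) (by omega) (by omega)
      have hr2 := hgrec l2 h2 (i+1) (by omega) (by omega)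
      rw [e] at hr1 hr2
      have hd : (0:ℝ) < (↑(i+1):ℝ) * μ := by push_cast; exact hden i
      have hgle : g l2 i θ ≤ g l1 i θ := by
        rw [hr1 θ, hr2 θ]
        have hnum : θ - l2 * m (g l2 (i+1) θ) ≤ θ - l1 * m (g l1 (i+1) θ) := by linarith
        exact div_le_div_of_nonneg_right hnum hd.le
      refine ⟨hgle, ?_⟩
      have hmm : m (g l1 i θ) ≤ m (g l2 i θ) := m_anti _ _ hgle
      have h0 : 0 ≤ m (g l1 i θ) := m_nonneg _
      nlinarith [mul_le_mul_of_nonneg_left hmm h1.le,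
        mul_le_mul_of_nonneg_right h12 (le_trans h0 hmm)]
  -- no "bad index" lemma
  have hE : ∀ lam : ℝ, 0 < lam → ∀ θ : ℝ, θ ≤ lam * m (g lam 0 θ) →
      ∀ i : ℕ, 1 ≤ i → i ≤ K - 1 →
      ¬(g lam i θ < g lam (i-1) θ ∧ 0 < g lam (i-1) θ) := by
    intro lam hlam θ hsub i
    induction i with
    | zero => intro h; omega
    | succ i ih =>
      intro _ hiK
      rcases Nat.eq_zero_or_pos i with h0 | hpos
      · subst h0
        rintro ⟨hlt, hposg⟩
        have e : (1:ℕ) - 1 = 0 := rfl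
        have hr := hgrec lam hlam 1 le_rfl (by omega) θ
        rw [e] at hr hlt hposg
        have hd : (0:ℝ) < ((1:ℕ):ℝ) * μ := by push_cast; linarith
        have hmul : θ - lam * m (g lam 1 θ) = g lam 0 θ * (((1:ℕ):ℝ) * μ) :=
          (div_eq_iff hd.ne').mp hr.symm
        have hmle : m (g lam 0 θ) ≤ m (g lam 1 θ) := m_anti _ _ hlt.le
        have hp : 0 < g lam 0 θ * (((1:ℕ):ℝ) * μ) := mul_pos hposg hd
        have := mul_le_mul_of_nonneg_left hmle hlam.le
        linarith
      · rintro ⟨hlt, hposg⟩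
        have e1 : (i+1) - 1 = i := by omega
        rw [e1] at hlt hposg
        apply ih hpos (by omega)
        have hri := hgrec lam hlam i hpos (by omega) θ
        have hri1 := hgrec lam hlam (i+1) (by omega) (by omega) θ
        rw [e1] at hri1
        have hdi : (0:ℝ) < (i:ℝ) * μ := mul_pos (by exact_mod_cast hpos) hμ
        have hdi1 : (0:ℝ) < (↑(i+1):ℝ) * μ := by push_cast; exact hden i
        have hm1 : θ - lam * m (g lam i θ) = g lam (i-1) θ * ((i:ℝ) * μ) :=
          (div_eq_iff hdi.ne').mp hri.symm
        have hm2 : θ - lam * m (g lam (i+1) θ) = g lam i θ * ((↑(i+1):ℝ) * μ) :=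
          (div_eq_iff hdi1.ne').mp hri1.symm
        have hm2' : θ - lam * m (g lam (i+1) θ)
            = g lam i θ * ((i:ℝ) * μ) + g lam i θ * μ := by
          rw [hm2]; push_cast; ring
        have hmle : m (g lam i θ) ≤ m (g lam (i+1) θ) := m_anti _ _ hlt.le
        have hkey : g lam i θ < g lam (i-1) θ := by
          by_contra hc
          push_neg at hc
          have hmm := mul_le_mul_of_nonneg_right hc hdi.le
          have := mul_le_mul_of_nonneg_left hmle hlam.le
          have hbμ : 0 < g lam i θ * μ := mul_pos hposg hμ
          linarith
        exact ⟨hkey, lt_trans hposg hkey⟩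
  -- chain lemma : g_{i-1} ≤ g_i at subsolutions
  have hF : ∀ lam : ℝ, 0 < lam → ∀ θ : ℝ, θ ≤ lam * m (g lam 0 θ) →
      ∀ d i : ℕ, 1 ≤ i → i + d = K - 1 → g lam (i-1) θ ≤ g lam i θ := by
    intro lam hlam θ hsub d
    induction d with
    | zero =>
      intro i h1 hi
      by_contra hc
      push_neg at hc
      apply hE lam hlam θ hsub i h1 (by omega)
      refine ⟨hc, ?_⟩
      -- i = K - 1 here
      have e2 : K - 1 = i := by omega
      have htop := hgtop lam hlam θ
      rw [e2] at htop
      have hr := hgrec lam hlam i h1 (by omega) θ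
      have hdi : (0:ℝ) < (i:ℝ) * μ := mul_pos (by exact_mod_cast h1) hμ
      have hm1 : θ - lam * m (g lam i θ) = g lam (i-1) θ * ((i:ℝ) * μ) :=
        (div_eq_iff hdi.ne').mp hr.symm
      have hmt : θ = g lam i θ * ((K:ℝ) * μ) := (div_eq_iff hKμ.ne').mp htop.symm
      have hcK : (K:ℝ) = (i:ℝ) + 1 := by
        have : K = i + 1 := by omega
        exact_mod_cast congrArg (Nat.cast : ℕ → ℝ) this
      have hexp : g lam i θ * ((K:ℝ) * μ)
          = g lam i θ * ((i:ℝ) * μ) + g lam i θ * μ := by rw [hcK]; ring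
      have hmnn : 0 ≤ lam * m (g lam i θ) := mul_nonneg hlam.le (m_nonneg _)
      have hBpos : 0 < g lam i θ := by
        by_contra hb
        push_neg at hb
        have h3 : g lam i θ * μ ≤ 0 := mul_nonpos_of_nonpos_of_nonneg hb hμ.le
        have h4 := mul_lt_mul_of_pos_right hc hdi
        linarith
      exact lt_trans hBpos hc
    | succ d ih =>
      intro i h1 hi
      by_contra hc
      push_neg at hc
      apply hE lam hlam θ hsub i h1 (by omega)
      refine ⟨hc, ?_⟩
      have e1 : (i+1) - 1 = i := by omega
      have hF1 : g lam i θ ≤ g lam (i+1) θ := by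
        have := ih (i+1) (by omega) (by omega)
        rwa [e1] at this
      have hri := hgrec lam hlam i h1 (by omega) θ
      have hri1 := hgrec lam hlam (i+1) (by omega) (by omega) θ
      rw [e1] at hri1
      have hdi : (0:ℝ) < (i:ℝ) * μ := mul_pos (by exact_mod_cast h1) hμ
      have hdi1 : (0:ℝ) < (↑(i+1):ℝ) * μ := by push_cast; exact hden i
      have hm1 : θ - lam * m (g lam i θ) = g lam (i-1) θ * ((i:ℝ) * μ) :=
        (div_eq_iff hdi.ne').mp hri.symm
      have hm2 : θ - lam * m (g lam (i+1) θ) = g lam i θ * ((↑(i+1):ℝ) * μ) :=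
        (div_eq_iff hdi1.ne').mp hri1.symm
      have hm2' : θ - lam * m (g lam (i+1) θ)
          = g lam i θ * ((i:ℝ) * μ) + g lam i θ * μ := by
        rw [hm2]; push_cast; ring
      have hmle : m (g lam (i+1) θ) ≤ m (g lam i θ) := m_anti _ _ hF1
      have hmm := mul_le_mul_of_nonneg_left hmle hlam.le
      have hBpos : 0 < g lam i θ := by
        by_contra hb
        push_neg at hb
        have h3 : g lam i θ * μ ≤ 0 := mul_nonpos_of_nonpos_of_nonneg hb hμ.le
        have h4 := mul_lt_mul_of_pos_right hc hdi
        linarith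
      exact lt_trans hBpos hc
  -- monotone chain from 0
  have hchain : ∀ lam : ℝ, 0 < lam → ∀ θ : ℝ, θ ≤ lam * m (g lam 0 θ) →
      ∀ i : ℕ, i ≤ K - 1 → g lam 0 θ ≤ g lam i θ := by
    intro lam hlam θ hsub i
    induction i with
    | zero => intro _; exact le_refl _
    | succ i ih =>
      intro hi
      have h1 : g lam 0 θ ≤ g lam i θ := ih (by omega)
      have h2 := hF lam hlam θ hsub (K - 1 - (i+1)) (i+1) (by omega) (by omega)
      have e1 : (i+1) - 1 = i := by omega
      rw [e1] at h2
      exact le_trans h1 h2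
  -- nonnegativity of g_0 at fixed points
  have hg0 : ∀ lam : ℝ, 0 < lam → ∀ θ : ℝ, θ = lam * m (g lam 0 θ) → 0 ≤ g lam 0 θ := by
    intro lam hlam θ hfix
    have hθ0 : 0 ≤ θ := by
      rw [hfix]; exact mul_nonneg hlam.le (m_nonneg _)
    rcases Nat.lt_or_ge K 2 with hK1 | hK2
    · have e : K - 1 = 0 := by omega
      have htop := hgtop lam hlam θ
      rw [e] at htop
      rw [htop]
      positivity
    · have h2 := hF lam hlam θ hfix.le (K - 2) 1 le_rfl (by omega)
      have e : (1:ℕ) - 1 = 0 := rfl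
      rw [e] at h2
      have hr := hgrec lam hlam 1 le_rfl (by omega) θ
      rw [e] at hr
      have hmle : m (g lam 1 θ) ≤ m (g lam 0 θ) := m_anti _ _ h2
      have hd : (0:ℝ) < ((1:ℕ):ℝ) * μ := by push_cast; linarith
      have hnum : 0 ≤ θ - lam * m (g lam 1 θ) := by
        have := mul_le_mul_of_nonneg_left hmle hlam.le
        linarith
      rw [hr]
      exact div_nonneg hnum hd.le
  refine ⟨?_, ?_⟩
  -- part (a)
  · intro l1 l2 h1 h12
    have h2 : 0 < l2 := lt_of_lt_of_le h1 h12
    by_contra hc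
    push_neg at hc
    have e1 := hθ l1 h1
    have e2 := hθ l2 h2
    have hA := claimA l2 h2 (θstar l2) (θstar l1) hc.le (K-1) 0 (by omega)
    have hmA : m (g l2 0 (θstar l1)) ≤ m (g l2 0 (θstar l2)) := m_anti _ _ hA
    have hB := (claimB l1 l2 h1 h12 (θstar l1) (K-1) 0 (by omega)).2
    have := mul_le_mul_of_nonneg_left hmA h2.le
    linarith
  -- part (b)
  · intro l1 l2 h1 h12
    have h2 : 0 < l2 := lt_of_lt_of_le h1 h12
    by_contra hc
    push_neg at hc
    set t1 := θstar l1
    set t2 := θstar l2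
    have e1 : t1 = l1 * m (g l1 0 t1) := hθ l1 h1
    have e2 : t2 = l2 * m (g l2 0 t2) := hθ l2 h2
    have ht1nn : 0 ≤ t1 := by rw [e1]; exact mul_nonneg h1.le (m_nonneg _)
    have ht2nn : 0 ≤ t2 := by rw [e2]; exact mul_nonneg h2.le (m_nonneg _)
    have hdl : t1 * l2 < t2 * l1 := (div_lt_div_iff₀ h1 h2).mp hc
    -- nonnegativity at the λ₁ fixed point
    have hnn : ∀ i : ℕ, i ≤ K - 1 → 0 ≤ g l1 i t1 := fun i hi =>
      le_trans (hg0 l1 h1 t1 e1) (hchain l1 h1 t1 e1.le i hi)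
    -- invariant
    have hI : ∀ i : ℕ, i ≤ K - 1 → m (g l1 i t1) < m (g l2 i t2) := by
      intro i
      induction i with
      | zero =>
        intro _
        have a1 : m (g l1 0 t1) = t1 / l1 := by
          rw [eq_div_iff h1.ne']; linarith
        have a2 : m (g l2 0 t2) = t2 / l2 := by
          rw [eq_div_iff h2.ne']; linarith
        rw [a1, a2]; exact hc
      | succ i ih =>
        intro hi
        have hIi := ih (by omega)
        have hlt : g l2 i t2 < g l1 i t1 := m_lt _ _ hIi
        have ha1 : 0 ≤ g l1 i t1 := hnn i (by omega)
        have hq : g l2 i t2 * l1 ≤ g l1 i t1 * l2 := by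
          rcases le_or_gt (g l2 i t2) 0 with hb | hb
          · have := mul_nonpos_of_nonpos_of_nonneg hb h1.le
            have := mul_nonneg ha1 h2.le
            linarith
          · have q1 := mul_le_mul_of_nonneg_left h12 hb.le
            have q2 := mul_le_mul_of_nonneg_right hlt.le h2.le
            nlinarith
        have e : (i+1) - 1 = i := by omega
        have hr1 := hgrec l1 h1 (i+1) (by omega) (by omega) t1
        have hr2 := hgrec l2 h2 (i+1) (by omega) (by omega) t2
        rw [e] at hr1 hr2
        have hd : (0:ℝ) < (↑(i+1):ℝ) * μ := by push_cast; exact hden i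
        have hm1 : t1 - l1 * m (g l1 (i+1) t1) = g l1 i t1 * ((↑(i+1):ℝ) * μ) :=
          (div_eq_iff hd.ne').mp hr1.symm
        have hm2 : t2 - l2 * m (g l2 (i+1) t2) = g l2 i t2 * ((↑(i+1):ℝ) * μ) :=
          (div_eq_iff hd.ne').mp hr2.symm
        by_contra hcc
        push_neg at hcc
        have E1' : t1 * l2 = l1 * m (g l1 (i+1) t1) * l2
            + g l1 i t1 * ((↑(i+1):ℝ) * μ) * l2 := by
          have : (t1 - l1 * m (g l1 (i+1) t1)) * l2
              = g l1 i t1 * ((↑(i+1):ℝ) * μ) * l2 := by rw [hm1]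
          linarith [this]
        have E2' : t2 * l1 = l2 * m (g l2 (i+1) t2) * l1
            + g l2 i t2 * ((↑(i+1):ℝ) * μ) * l1 := by
          have : (t2 - l2 * m (g l2 (i+1) t2)) * l1
              = g l2 i t2 * ((↑(i+1):ℝ) * μ) * l1 := by rw [hm2]
          linarith [this]
        have cq : 0 ≤ ((↑(i+1):ℝ) * μ) * (g l1 i t1 * l2 - g l2 i t2 * l1) :=
          mul_nonneg hd.le (by linarith)
        have hml := mul_le_mul_of_nonneg_left hcc (mul_pos h1 h2).le
        nlinarith [E1', E2', cq, hml, hdl]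
    -- contradiction at i = K-1
    have htopI := hI (K-1) le_rfl
    rw [hgtop l1 h1 t1, hgtop l2 h2 t2] at htopI
    have ht12 : t1 ≤ t2 := by
      have := mul_le_mul_of_nonneg_left h12 ht2nn
      have h5 : t1 * l2 < t2 * l2 := by linarith
      exact (lt_of_mul_lt_mul_right h5 h2.le).le
    have hdd : t1 / ((K:ℝ) * μ) ≤ t2 / ((K:ℝ) * μ) :=
      div_le_div_of_nonneg_right ht12 hKμ.le
    have := m_anti _ _ hdd
    linarith
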